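/- Let γ be a strictly positive k-positive sequence and l ≥ 1. Define γ'(t) as the rank-one perturbation: γ'_n = γ_n for n ≤ l, γ'_n = tγ_n for n > l. Then the set I^k := { t ≥ 0 : γ'(t) is k-positive } is a nonempty closed bounded interval containing 1, contained in [γ_l²/(γ_{l−1}γ_{l+1}), γ_l γ_{l+2}/γ_{l+1}²]. -/

import Mathlib

lemma psd_quad {m : ℕ} {M : Matrix (Fin m) (Fin m) ℝ} (hM : M.PosSemidef)
    (i₀ i₁ : Fin m) (hne : i₀ ≠ i₁) (a b : ℝ) :
    0 ≤ a * a * M i₀ i₀ + a * b * M i₀ i₁ + b * a * M i₁ i₀ + b * b * M i₁ i₁ := by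
  set x : Fin m → ℝ := fun i => if i = i₀ then a else if i = i₁ then b else 0 with hxdef
  have hx : ∀ y : Fin m → ℝ, ∑ i, x i * y i = a * y i₀ + b * y i₁ := by
    intro y
    rw [← Finset.sum_subset (Finset.subset_univ ({i₀, i₁} : Finset (Fin m)))]
    · rw [Finset.sum_pair hne]
      simp [hxdef, hne.symm]
    · intro i _ hi
      simp only [Finset.mem_insert, Finset.mem_singleton, not_or] at hi
      simp [hxdef, hi.1, hi.2]
  have h := hM.dotProduct_mulVec_nonneg x
  simp only [star_trivial, dotProduct, Matrix.mulVec] at h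
  rw [hx] at h
  have e : ∀ i : Fin m, ∑ j, M i j * x j = a * M i i₀ + b * M i i₁ := by
    intro i
    simp_rw [mul_comm (M i _)]
    exact hx (fun j => M i j)
  rw [e i₀, e i₁] at h
  ring_nf at h ⊢
  linarith

theorem rank_one_perturbation_interval (γ : ℕ → ℝ) (k l : ℕ) (hk : 1 ≤ k) (hl : 1 ≤ l)
    (hγpos : ∀ n, 0 < γ n)
    (hpos : ∀ n : ℕ, (Matrix.of fun i j : Fin (k + 1) => γ (n + i + j)).PosSemidef) :
    let Ik : Set ℝ := {t : ℝ | 0 ≤ t ∧ ∀ n : ℕ,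
      (Matrix.of fun i j : Fin (k + 1) =>
        if n + (i : ℕ) + j ≤ l then γ (n + i + j) else t * γ (n + i + j)).PosSemidef}
    (1 : ℝ) ∈ Ik ∧ (∃ a b : ℝ, Ik = Set.Icc a b) ∧
      Ik ⊆ Set.Icc (γ l ^ 2 / (γ (l - 1) * γ (l + 1))) (γ l * γ (l + 2) / γ (l + 1) ^ 2) := by
  intro Ik
  have herm : ∀ (t : ℝ) (n : ℕ), (Matrix.of fun i j : Fin (k + 1) =>
      if n + (i : ℕ) + j ≤ l then γ (n + i + j) else t * γ (n + i + j)).IsHermitian := by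
    intro t n
    show _ = _
    ext i j
    simp only [Matrix.conjTranspose_apply, Matrix.of_apply, star_trivial]
    rw [show n + (j : ℕ) + i = n + (i : ℕ) + j from by omega]
  -- 1 ∈ Ik
  have h1mem : (1 : ℝ) ∈ Ik := by
    refine ⟨zero_le_one, fun n => ?_⟩
    simpa only [one_mul, ite_self] using hpos n
  -- subset
  have hsub : Ik ⊆ Set.Icc (γ l ^ 2 / (γ (l - 1) * γ (l + 1)))
      (γ l * γ (l + 2) / γ (l + 1) ^ 2) := by
    rintro t ⟨ht0, hpsd⟩
    have hE : ∀ (s : ℝ) (n a b : ℕ) (ha : a < k + 1) (hb : b < k + 1),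
        (Matrix.of fun i j : Fin (k + 1) =>
          if n + (i : ℕ) + j ≤ l then γ (n + i + j) else s * γ (n + i + j))
          ⟨a, ha⟩ ⟨b, hb⟩
        = if n + a + b ≤ l then γ (n + a + b) else s * γ (n + a + b) := fun _ _ _ _ _ _ => rfl
    have hne : (⟨0, by omega⟩ : Fin (k + 1)) ≠ ⟨1, by omega⟩ := by simp [Fin.ext_iff]
    -- lower bound
    have h1 := psd_quad (hpsd (l - 1)) ⟨0, by omega⟩ ⟨1, by omega⟩ hne (γ l) (-(γ (l - 1)))
    rw [hE, hE, hE, hE] at h1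
    simp only [show l - 1 + 0 + 0 = l - 1 from by omega, show l - 1 + 0 + 1 = l from by omega,
      show l - 1 + 1 + 0 = l from by omega, show l - 1 + 1 + 1 = l + 1 from by omega, Nat.add_zero] at h1
    rw [if_pos (show l - 1 ≤ l from by omega), if_pos (le_refl l),
      if_neg (show ¬ l + 1 ≤ l from by omega)] at h1
    have hlow : γ l ^ 2 / (γ (l - 1) * γ (l + 1)) ≤ t := by
      rw [div_le_iff₀ (mul_pos (hγpos (l - 1)) (hγpos (l + 1)))]
      nlinarith [h1, hγpos (l - 1), mul_pos (hγpos (l - 1)) (hγpos (l + 1))]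
    have ht0' : 0 < t := lt_of_lt_of_le (div_pos (pow_pos (hγpos l) 2) (mul_pos (hγpos (l - 1)) (hγpos (l + 1)))) hlow
    -- upper bound
    have h2 := psd_quad (hpsd l) ⟨0, by omega⟩ ⟨1, by omega⟩ hne (t * γ (l + 1)) (-(γ l))
    rw [hE, hE, hE, hE] at h2
    simp only [show l + 0 + 0 = l from by omega, show l + 0 + 1 = l + 1 from by omega,
      show l + 1 + 0 = l + 1 from by omega, show l + 1 + 1 = l + 2 from by omega, Nat.add_zero] at h2
    rw [if_pos (le_refl l), if_neg (show ¬ l + 1 ≤ l from by omega),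
      if_neg (show ¬ l + 2 ≤ l from by omega)] at h2
    refine ⟨hlow, ?_⟩
    rw [le_div_iff₀ (pow_pos (hγpos (l + 1)) 2)]
    nlinarith [h2, hγpos l, ht0', mul_pos ht0' (hγpos l)]
  -- convexity
  have hconv : Convex ℝ Ik := by
    rintro t1 ⟨ht10, ht1⟩ t2 ⟨ht20, ht2⟩ a b ha hb hab
    simp only [smul_eq_mul]
    refine ⟨add_nonneg (mul_nonneg ha ht10) (mul_nonneg hb ht20), fun n => ?_⟩
    have hM : (Matrix.of fun i j : Fin (k + 1) =>
        if n + (i : ℕ) + j ≤ l then γ (n + i + j) else (a * t1 + b * t2) * γ (n + i + j))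
        = a • (Matrix.of fun i j : Fin (k + 1) =>
            if n + (i : ℕ) + j ≤ l then γ (n + i + j) else t1 * γ (n + i + j))
          + b • (Matrix.of fun i j : Fin (k + 1) =>
            if n + (i : ℕ) + j ≤ l then γ (n + i + j) else t2 * γ (n + i + j)) := by
      ext i j
      simp only [Matrix.of_apply, Matrix.add_apply, Matrix.smul_apply, smul_eq_mul]
      split
      · linear_combination (-(γ (n + ↑i + ↑j))) * hab
      · ring
    refine Matrix.PosSemidef.of_dotProduct_mulVec_nonneg (herm (a * t1 + b * t2) n) fun x => ?_
    rw [hM]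
    simp only [star_trivial, Matrix.add_mulVec, Matrix.smul_mulVec,
      dotProduct_add, dotProduct_smul, smul_eq_mul]
    exact add_nonneg (mul_nonneg ha (by simpa only [star_trivial] using (ht1 n).dotProduct_mulVec_nonneg x))
      (mul_nonneg hb (by simpa only [star_trivial] using (ht2 n).dotProduct_mulVec_nonneg x))
  -- closedness
  have hclosed : IsClosed Ik := by
    have hIk : Ik = Set.Ici (0 : ℝ) ∩ ⋂ (n : ℕ), ⋂ (x : Fin (k + 1) → ℝ),
        {t : ℝ | 0 ≤ dotProduct x ((Matrix.of fun i j : Fin (k + 1) =>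
          if n + (i : ℕ) + j ≤ l then γ (n + i + j) else t * γ (n + i + j)).mulVec x)} := by
      ext t
      simp only [Ik, Set.mem_setOf_eq, Set.mem_inter_iff, Set.mem_iInter, Set.mem_Ici]
      constructor
      · rintro ⟨h0, h⟩
        exact ⟨h0, fun n x => by simpa only [star_trivial] using (h n).dotProduct_mulVec_nonneg x⟩
      · rintro ⟨h0, h⟩
        exact ⟨h0, fun n => Matrix.PosSemidef.of_dotProduct_mulVec_nonneg (herm t n) fun x => by simpa only [star_trivial] using h n x⟩
    rw [hIk]
    refine isClosed_Ici.inter (isClosed_iInter fun n => isClosed_iInter fun x => ?_)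
    refine isClosed_le continuous_const ?_
    simp only [dotProduct, Matrix.mulVec, Matrix.of_apply]
    apply continuous_finset_sum
    intro i _
    apply Continuous.mul continuous_const
    apply continuous_finset_sum
    intro j _
    apply Continuous.mul ?_ continuous_const
    by_cases h : n + (i : ℕ) + j ≤ l
    · simp only [if_pos h]; exact continuous_const
    · simp only [if_neg h]; exact continuous_id.mul continuous_const
  have hcomp : IsCompact Ik :=
    Metric.isCompact_of_isClosed_isBounded hclosed ((Metric.isBounded_Icc _ _).subset hsub)
  have hicc := eq_Icc_of_connected_compact ⟨⟨1, h1mem⟩, hconv.isPreconnected⟩ hcomp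
  exact ⟨h1mem, ⟨_, _, hicc⟩, hsub⟩
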